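/- Let Ω ⊂ ℝⁿ be a bounded measurable set, 2 ≤ p < n, and let V : Ω × ℝ → ℝ be a Carathéodory function satisfying the growth condition |V(x,σ)| ≤ c₀|σ|^{m₁} for a.e. x ∈ Ω and all σ ∈ ℝ, where p − 1 ≤ m₁ < (p−1)(1 + 1/(n−p)). Set m₃ = n(p−1)/(n−p). Then there is a constant C > 0, depending only on n, p, m₁, c₀ and |Ω|, such that for every u ∈ L^∞(Ω): ‖V(·, u(·))‖_{L^{n,1}(Ω)}^{1/(p−1)} ≤ C · ‖u‖_{L^∞} · ‖u‖_{L^{m₃,1}(Ω)}^{(m₁+1−p)/(p−1)}. -/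

import Mathlib

open MeasureTheory Set Filter
open scoped ENNReal Topology

/-- The decreasing rearrangement of `|f|` with respect to the measure `μ`:
`f_*(s) = inf { t ≥ 0 : μ{|f| > t} ≤ s }`. -/
noncomputable def rearr {Ω : Type*} [MeasurableSpace Ω] (μ : Measure Ω)
    (f : Ω → ℝ) (s : ℝ) : ℝ :=
  sInf {t : ℝ | 0 ≤ t ∧ (μ {x | t < |f x|}).toReal ≤ s}

/-- The Lorentz norm `‖f‖_{L^{q,1}(μ)} = ∫₀^{μ(Ω)} t^{1/q} f_*(t) dt/t`. -/
noncomputable def lorentzOneNorm {Ω : Type*} [MeasurableSpace Ω] (μ : Measure Ω)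
    (q : ℝ) (f : Ω → ℝ) : ℝ≥0∞ :=
  ∫⁻ t in Ioo (0:ℝ) (μ univ).toReal, ENNReal.ofReal (t ^ (1 / q - 1) * rearr μ f t)

section helpers
variable {Ω : Type*} [MeasurableSpace Ω] {μ : Measure Ω} {f u g : Ω → ℝ}

lemma rearr_nonneg (s : ℝ) : 0 ≤ rearr μ f s :=
  Real.sInf_nonneg (fun _ hx => hx.1)

lemma rearr_le {s a : ℝ} (ha : 0 ≤ a) (h : (μ {x | a < |f x|}).toReal ≤ s) :
    rearr μ f s ≤ a :=
  csInf_le ⟨0, fun _ hx => hx.1⟩ ⟨ha, h⟩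

lemma rearr_anti {M : ℝ} (hM : 0 ≤ M) (hM0 : μ {x | M < |f x|} = 0)
    {s t : ℝ} (hs : 0 ≤ s) (hst : s ≤ t) : rearr μ f t ≤ rearr μ f s :=
  csInf_le_csInf ⟨0, fun _ hx => hx.1⟩ ⟨M, hM, by simp [hM0, hs]⟩
    (fun a ha => ⟨ha.1, ha.2.trans hst⟩)

lemma rearr_comp_le [IsFiniteMeasure μ] {c0 m1 : ℝ} (hc0 : 0 < c0) (hm1 : 0 < m1)
    (hdom : ∀ᵐ x ∂μ, |g x| ≤ c0 * |u x| ^ m1)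
    {M : ℝ} (hM : 0 ≤ M) (hM0 : μ {x | M < |u x|} = 0)
    {s : ℝ} (hs : 0 ≤ s) :
    rearr μ g s ≤ c0 * (rearr μ u s) ^ m1 := by
  set r := rearr μ u s with hr
  have hrn : 0 ≤ r := rearr_nonneg s
  have hne : {t : ℝ | 0 ≤ t ∧ (μ {x | t < |u x|}).toReal ≤ s}.Nonempty :=
    ⟨M, hM, by simp [hM0, hs]⟩
  have key : ∀ b, r < b → rearr μ g s ≤ c0 * b ^ m1 := by
    intro b hb
    obtain ⟨a, ⟨ha0, haμ⟩, hab⟩ := exists_lt_of_csInf_lt hne hb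
    have hsub : {x | c0 * a ^ m1 < |g x|} ≤ᵐ[μ] {x | a < |u x|} := by
      filter_upwards [hdom] with x hx hx2
      have hx2' : c0 * a ^ m1 < |g x| := hx2
      show a < |u x|
      by_contra hcon
      push_neg at hcon
      have h1 : |u x| ^ m1 ≤ a ^ m1 := Real.rpow_le_rpow (abs_nonneg _) hcon hm1.le
      have h2 : c0 * |u x| ^ m1 ≤ c0 * a ^ m1 := by nlinarith
      linarith [hx.trans h2]
    have hmeas : (μ {x | c0 * a ^ m1 < |g x|}).toReal ≤ s := by
      refine le_trans ?_ haμ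
      exact ENNReal.toReal_mono (measure_ne_top μ _) (measure_mono_ae hsub)
    have h1 : rearr μ g s ≤ c0 * a ^ m1 :=
      rearr_le (by positivity) hmeas
    refine h1.trans ?_
    have : a ^ m1 ≤ b ^ m1 := Real.rpow_le_rpow ha0 hab.le hm1.le
    nlinarith
  refine ge_of_tendsto (x := 𝓝[>] r) ?_ (by filter_upwards [self_mem_nhdsWithin] with b hb; exact key b hb)
  have hcont : ContinuousAt (fun b : ℝ => c0 * b ^ m1) r := by
    have : ContinuousAt (fun b : ℝ => b ^ m1) r := by
      rcases eq_or_lt_of_le hrn with h|h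
      · exact Real.continuousAt_rpow_const _ _ (Or.inr hm1.le)
      · exact Real.continuousAt_rpow_const _ _ (Or.inl h.ne')
    exact (continuousAt_const.mul this)
  exact hcont.continuousWithinAt.tendsto

lemma lint_rpow {e t : ℝ} (he : -1 < e) (ht : 0 ≤ t) :
    ∫⁻ s in Ioo (0:ℝ) t, ENNReal.ofReal (s ^ e) = ENNReal.ofReal (t ^ (e+1) / (e+1)) := by
  have hInt : IntegrableOn (fun s : ℝ => s ^ e) (Ioo 0 t) := by
    have := (intervalIntegral.intervalIntegrable_rpow' (a := 0) (b := t) he)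
    rw [intervalIntegrable_iff] at this
    exact this.mono_set (by rw [uIoc_of_le ht]; exact Ioo_subset_Ioc_self)
  have hpos : 0 ≤ᵐ[volume.restrict (Ioo (0:ℝ) t)] fun s : ℝ => s ^ e := by
    rw [EventuallyLE, ae_restrict_iff' measurableSet_Ioo]
    exact ae_of_all _ fun x hx => Real.rpow_nonneg hx.1.le _
  rw [← MeasureTheory.ofReal_integral_eq_lintegral_ofReal hInt hpos]
  congr 1
  rw [← integral_Ioc_eq_integral_Ioo, ← intervalIntegral.integral_of_le ht,
    integral_rpow (Or.inl he), Real.zero_rpow (by linarith), sub_zero]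

end helpers

/-- Let `Ω ⊂ ℝⁿ` be a bounded measurable set, `2 ≤ p < n`, and let
`V : Ω × ℝ → ℝ` be a Carathéodory function with `|V(x,σ)| ≤ c₀|σ|^{m₁}`,
`p − 1 ≤ m₁ < (p−1)(1 + 1/(n−p))`. Set `m₃ = n(p−1)/(n−p)`. Then there is `C > 0`,
depending only on `n, p, m₁, c₀` and `|Ω|`, such that for every `u ∈ L^∞(Ω)`:
`‖V(·,u(·))‖_{L^{n,1}}^{1/(p−1)} ≤ C ‖u‖_∞ ‖u‖_{L^{m₃,1}}^{(m₁+1−p)/(p−1)}`. -/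
theorem stmt15 (n : ℕ) (hn : 2 ≤ n) (p m1 c0 : ℝ)
    (hp2 : 2 ≤ p) (hpn : p < n) (hc0 : 0 < c0)
    (hm1l : p - 1 ≤ m1) (hm1u : m1 < (p - 1) * (1 + 1 / (n - p)))
    (W : ℝ≥0∞) (hW : W ≠ ⊤) :
    ∃ C : ℝ, 0 < C ∧
      ∀ Ω : Set (EuclideanSpace ℝ (Fin n)),
        MeasurableSet Ω → Bornology.IsBounded Ω → volume Ω = W →
      ∀ V : EuclideanSpace ℝ (Fin n) → ℝ → ℝ,
        (∀ σ : ℝ, Measurable fun x => V x σ) →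
        (∀ᵐ x ∂volume.restrict Ω, Continuous (V x)) →
        (∀ᵐ x ∂volume.restrict Ω, ∀ σ : ℝ, |V x σ| ≤ c0 * |σ| ^ m1) →
      ∀ u : EuclideanSpace ℝ (Fin n) → ℝ, Measurable u →
        eLpNorm u ⊤ (volume.restrict Ω) < ⊤ →
        lorentzOneNorm (volume.restrict Ω) n (fun x => V x (u x)) ^ (1 / (p - 1)) ≤
          ENNReal.ofReal C * eLpNorm u ⊤ (volume.restrict Ω) *
            lorentzOneNorm (volume.restrict Ω) ((n : ℝ) * (p - 1) / (n - p)) u ^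
              ((m1 + 1 - p) / (p - 1)) := by
  -- basic numeric facts
  have hn0 : (0:ℝ) < n := by exact_mod_cast (by omega : 0 < n)
  have hp1 : (1:ℝ) < p := by linarith
  have hnp : (0:ℝ) < (n:ℝ) - p := by linarith
  set m3 : ℝ := (n : ℝ) * (p - 1) / ((n:ℝ) - p) with hm3def
  have hm3 : 0 < m3 := by
    apply div_pos _ hnp
    nlinarith
  set θ : ℝ := m1 + 1 - p with hθdef
  have hθ : 0 ≤ θ := by simp only [hθdef]; linarith
  have hm1pos : 0 < m1 := by linarith
  set κ : ℝ := 1 / (n:ℝ) - θ / m3 with hκdef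
  have hκ : 0 < κ := by
    have hexp : (p-1) * (1 + 1/((n:ℝ)-p)) = p - 1 + (p-1)/((n:ℝ)-p) := by ring
    have h2 : (m1 - (p-1)) * ((n:ℝ)-p) < p - 1 := by
      rw [← lt_div_iff₀ hnp]
      rw [hexp] at hm1u
      linarith
    have h1 : θ * ((n:ℝ) - p) < p - 1 := by
      calc θ * ((n:ℝ)-p) = (m1 - (p-1)) * ((n:ℝ)-p) := by rw [hθdef]; ring
        _ < p - 1 := h2
    have h3 : θ / m3 < 1 / (n:ℝ) := by
      rw [div_lt_div_iff₀ hm3 hn0, hm3def, one_mul, lt_div_iff₀ hnp]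
      nlinarith
    simp only [hκdef]; linarith
  set r : ℝ := 1 / (p - 1) with hrdef
  have hr : 0 < r := by rw [hrdef]; exact one_div_pos.mpr (by linarith)
  set T : ℝ := W.toReal with hTdef
  rcases eq_or_ne W 0 with hW0 | hW0
  · -- degenerate case : |Ω| = 0
    refine ⟨1, one_pos, ?_⟩
    intro Ω hΩm hΩb hvol V hVm hVc hVg u hu huL
    have hzero : lorentzOneNorm (volume.restrict Ω) (n:ℝ) (fun x => V x (u x)) = 0 := by
      have h1 : ((volume.restrict Ω) univ).toReal = 0 := by
        rw [Measure.restrict_apply_univ, hvol, hW0]; simp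
      rw [lorentzOneNorm, h1]
      simp
    rw [hzero, ENNReal.zero_rpow_of_pos hr]
    exact zero_le
  -- main case
  have hT : 0 < T := ENNReal.toReal_pos hW0 hW
  set K : ℝ := T ^ κ / κ with hKdef
  have hK : 0 < K := by
    apply div_pos _ hκ
    exact Real.rpow_pos_of_pos hT κ
  have hm3θ : (0:ℝ) < m3 ^ θ := Real.rpow_pos_of_pos hm3 θ
  have hm3e : (-1:ℝ) < 1/m3 - 1 := by
    have := one_div_pos.mpr hm3; linarith
  refine ⟨(c0 * K / m3 ^ θ) ^ r,
    Real.rpow_pos_of_pos (div_pos (mul_pos hc0 hK) hm3θ) r, ?_⟩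
  intro Ω hΩm hΩb hvol V hVm hVc hVg u hu huL
  set μ := volume.restrict Ω with hμdef
  haveI : IsFiniteMeasure μ := ⟨by rw [hμdef, Measure.restrict_apply_univ, hvol]; exact hW.lt_top⟩
  have hTuniv : (μ univ).toReal = T := by rw [hμdef, Measure.restrict_apply_univ, hvol]
  set g : EuclideanSpace ℝ (Fin n) → ℝ := fun x => V x (u x) with hgdef
  set E := eLpNorm u ⊤ μ with hEdef
  have hE : E ≠ ⊤ := huL.ne
  set M : ℝ := E.toReal with hMdef
  have hM0 : 0 ≤ M := ENNReal.toReal_nonneg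
  have hMae : ∀ᵐ x ∂μ, |u x| ≤ M := by
    filter_upwards [ae_le_eLpNormEssSup (f := u) (μ := μ)] with x hx
    have h2 : (‖u x‖₊ : ℝ≥0∞).toReal ≤ M := by
      rw [hMdef, hEdef, eLpNorm_exponent_top]
      exact ENNReal.toReal_mono (by rw [← eLpNorm_exponent_top]; exact hE) hx
    simpa [Real.norm_eq_abs] using h2
  have hMset : μ {x | M < |u x|} = 0 := by
    have h := hMae
    rw [ae_iff] at h
    convert h using 2
    ext x
    simp [not_le]
  have hg : ∀ᵐ x ∂μ, |g x| ≤ c0 * |u x| ^ m1 := by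
    filter_upwards [hVg] with x hx
    exact hx (u x)
  set L := lorentzOneNorm μ m3 u with hLdef
  have hLbound : L ≤ ENNReal.ofReal (T ^ (1/m3) / (1/m3)) * ENNReal.ofReal M := by
    rw [hLdef, lorentzOneNorm, hTuniv]
    calc ∫⁻ t in Ioo (0:ℝ) T, ENNReal.ofReal (t ^ (1/m3 - 1) * rearr μ u t)
        ≤ ∫⁻ t in Ioo (0:ℝ) T, ENNReal.ofReal (t ^ (1/m3 - 1)) * ENNReal.ofReal M := by
          apply lintegral_mono_ae
          rw [ae_restrict_iff' measurableSet_Ioo]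
          apply ae_of_all
          intro t ht
          rw [← ENNReal.ofReal_mul (Real.rpow_nonneg ht.1.le _)]
          apply ENNReal.ofReal_le_ofReal
          apply mul_le_mul_of_nonneg_left _ (Real.rpow_nonneg ht.1.le _)
          exact rearr_le hM0 (by rw [hMset, ENNReal.toReal_zero]; exact ht.1.le)
      _ = (∫⁻ t in Ioo (0:ℝ) T, ENNReal.ofReal (t ^ (1/m3 - 1))) * ENNReal.ofReal M :=
          lintegral_mul_const' _ _ ENNReal.ofReal_ne_top
      _ = ENNReal.ofReal (T ^ (1/m3) / (1/m3)) * ENNReal.ofReal M := by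
          rw [lint_rpow hm3e hT.le]
          norm_num
  have hLne : L ≠ ⊤ :=
    ne_top_of_le_ne_top (ENNReal.mul_ne_top ENNReal.ofReal_ne_top ENNReal.ofReal_ne_top) hLbound
  set D : ℝ := L.toReal with hDdef
  have hD0 : 0 ≤ D := ENNReal.toReal_nonneg
  -- decay bound : rearr u t ≤ (D/m3) * t^(-(1/m3)) on (0, T)
  have hdec : ∀ t ∈ Ioo (0:ℝ) T, rearr μ u t ≤ (D / m3) * t ^ (-(1/m3)) := by
    intro t ht
    have htm : 0 < t ^ (1/m3) := Real.rpow_pos_of_pos ht.1 _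
    have h6 : ENNReal.ofReal (t ^ (1/m3) / (1/m3) * rearr μ u t) ≤ L := by
      rw [hLdef, lorentzOneNorm, hTuniv]
      calc ENNReal.ofReal (t ^ (1/m3) / (1/m3) * rearr μ u t)
          = (∫⁻ s in Ioo (0:ℝ) t, ENNReal.ofReal (s ^ (1/m3 - 1))) * ENNReal.ofReal (rearr μ u t) := by
            have he1 : 1/m3 - 1 + 1 = 1/m3 := by ring
            rw [lint_rpow hm3e ht.1.le, he1,
              ← ENNReal.ofReal_mul (div_nonneg (Real.rpow_nonneg ht.1.le _) (one_div_nonneg.mpr hm3.le))]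
        _ = ∫⁻ s in Ioo (0:ℝ) t, ENNReal.ofReal (s ^ (1/m3 - 1)) * ENNReal.ofReal (rearr μ u t) :=
            (lintegral_mul_const' _ _ ENNReal.ofReal_ne_top).symm
        _ ≤ ∫⁻ s in Ioo (0:ℝ) t, ENNReal.ofReal (s ^ (1/m3 - 1) * rearr μ u s) := by
            apply lintegral_mono_ae
            rw [ae_restrict_iff' measurableSet_Ioo]
            apply ae_of_all
            intro s hs
            rw [← ENNReal.ofReal_mul (Real.rpow_nonneg hs.1.le _)]
            apply ENNReal.ofReal_le_ofReal
            apply mul_le_mul_of_nonneg_left _ (Real.rpow_nonneg hs.1.le _)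
            exact rearr_anti hM0 hMset hs.1.le hs.2.le
        _ ≤ ∫⁻ s in Ioo (0:ℝ) T, ENNReal.ofReal (s ^ (1/m3 - 1) * rearr μ u s) :=
            lintegral_mono_set (Ioo_subset_Ioo_right ht.2.le)
    have h7 : t ^ (1/m3) / (1/m3) * rearr μ u t ≤ D :=
      (ENNReal.ofReal_le_iff_le_toReal hLne).mp h6
    have h8 : t ^ (1/m3) * m3 * rearr μ u t ≤ D := by
      have hdd : t ^ (1/m3) / (1/m3) = t ^ (1/m3) * m3 := by
        field_simp
      rw [hdd] at h7; exact h7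
    have hgoal : D / m3 * t ^ (-(1/m3)) = D / (t ^ (1/m3) * m3) := by
      rw [Real.rpow_neg ht.1.le]
      field_simp
    rw [hgoal, le_div_iff₀ (mul_pos htm hm3)]
    calc rearr μ u t * (t ^ (1/m3) * m3) = t ^ (1/m3) * m3 * rearr μ u t := by ring
      _ ≤ D := h8
  -- pointwise bound for the L^{n,1} integrand
  set c : ℝ := c0 * M ^ (p-1) * (D/m3) ^ θ with hcdef
  have hcnn : 0 ≤ c := by
    rw [hcdef]
    exact mul_nonneg (mul_nonneg hc0.le (Real.rpow_nonneg hM0 _))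
      (Real.rpow_nonneg (div_nonneg hD0 hm3.le) _)
  have hsum : (p-1) + θ = m1 := by rw [hθdef]; ring
  have hpt : ∀ t ∈ Ioo (0:ℝ) T, t ^ (1/(n:ℝ) - 1) * rearr μ g t ≤ c * t ^ (κ - 1) := by
    intro t ht
    have ha : rearr μ g t ≤ c0 * (rearr μ u t) ^ m1 :=
      rearr_comp_le hc0 hm1pos hg hM0 hMset ht.1.le
    have hsplit : (rearr μ u t) ^ m1 = (rearr μ u t) ^ (p-1) * (rearr μ u t) ^ θ := by
      rw [← Real.rpow_add' (rearr_nonneg _) (by rw [hsum]; exact hm1pos.ne'), hsum]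
    have hb2 : (rearr μ u t) ^ (p-1) ≤ M ^ (p-1) :=
      Real.rpow_le_rpow (rearr_nonneg _)
        (rearr_le hM0 (by rw [hMset, ENNReal.toReal_zero]; exact ht.1.le)) (by linarith)
    have hb3 : (rearr μ u t) ^ θ ≤ (D/m3) ^ θ * t ^ (-(1/m3) * θ) := by
      calc (rearr μ u t) ^ θ ≤ ((D/m3) * t ^ (-(1/m3))) ^ θ :=
            Real.rpow_le_rpow (rearr_nonneg _) (hdec t ht) hθ
        _ = (D/m3) ^ θ * t ^ (-(1/m3) * θ) := by
            rw [Real.mul_rpow (div_nonneg hD0 hm3.le) (Real.rpow_nonneg ht.1.le _),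
              ← Real.rpow_mul ht.1.le]
    have hbig : rearr μ g t ≤ c * t ^ (-(1/m3) * θ) := by
      calc rearr μ g t ≤ c0 * (rearr μ u t) ^ m1 := ha
        _ = c0 * ((rearr μ u t) ^ (p-1) * (rearr μ u t) ^ θ) := by rw [hsplit]
        _ ≤ c0 * (M ^ (p-1) * ((D/m3) ^ θ * t ^ (-(1/m3) * θ))) := by
            apply mul_le_mul_of_nonneg_left _ hc0.le
            exact mul_le_mul hb2 hb3 (Real.rpow_nonneg (rearr_nonneg _) _)
              (Real.rpow_nonneg hM0 _)
        _ = c * t ^ (-(1/m3) * θ) := by rw [hcdef]; ring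
    calc t ^ (1/(n:ℝ)-1) * rearr μ g t ≤ t ^ (1/(n:ℝ)-1) * (c * t ^ (-(1/m3) * θ)) :=
          mul_le_mul_of_nonneg_left hbig (Real.rpow_nonneg ht.1.le _)
      _ = c * (t ^ (1/(n:ℝ)-1) * t ^ (-(1/m3) * θ)) := by ring
      _ = c * t ^ (κ - 1) := by
          rw [← Real.rpow_add ht.1]
          congr 1
          rw [hκdef]
          ring
  have hA : lorentzOneNorm μ (n:ℝ) g ≤ ENNReal.ofReal (c * K) := by
    rw [lorentzOneNorm, hTuniv]
    calc ∫⁻ t in Ioo (0:ℝ) T, ENNReal.ofReal (t ^ (1/(n:ℝ) - 1) * rearr μ g t)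
        ≤ ∫⁻ t in Ioo (0:ℝ) T, ENNReal.ofReal c * ENNReal.ofReal (t ^ (κ-1)) := by
          apply lintegral_mono_ae
          rw [ae_restrict_iff' measurableSet_Ioo]
          apply ae_of_all
          intro t ht
          rw [← ENNReal.ofReal_mul hcnn]
          exact ENNReal.ofReal_le_ofReal (hpt t ht)
      _ = ENNReal.ofReal c * ENNReal.ofReal (T ^ κ / κ) := by
          rw [lintegral_const_mul' _ _ ENNReal.ofReal_ne_top,
            lint_rpow (by linarith) hT.le]
          norm_num
      _ = ENNReal.ofReal (c * K) := by rw [← ENNReal.ofReal_mul hcnn, hKdef]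
  -- final algebra
  have hrealeq : (c * K) ^ r = (c0 * K / m3 ^ θ) ^ r * (M * D ^ (θ * r)) := by
    rw [hcdef, Real.div_rpow hD0 hm3.le]
    have hprod : c0 * M ^ (p-1) * (D ^ θ / m3 ^ θ) * K
        = (c0 * K / m3 ^ θ) * (M ^ (p-1) * D ^ θ) := by
      field_simp
    rw [hprod, Real.mul_rpow (div_nonneg (mul_pos hc0 hK).le hm3θ.le)
        (mul_nonneg (Real.rpow_nonneg hM0 _) (Real.rpow_nonneg hD0 _)),
      Real.mul_rpow (Real.rpow_nonneg hM0 _) (Real.rpow_nonneg hD0 _),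
      ← Real.rpow_mul hM0, ← Real.rpow_mul hD0]
    have hone : (p-1) * r = 1 := by
      rw [hrdef, mul_one_div, div_self (by linarith : p - (1:ℝ) ≠ 0)]
    rw [hone, Real.rpow_one]
  have hθr : θ * r = θ / (p-1) := by rw [hrdef]; ring
  calc lorentzOneNorm μ (n:ℝ) g ^ r ≤ ENNReal.ofReal (c * K) ^ r :=
        ENNReal.rpow_le_rpow hA hr.le
    _ = ENNReal.ofReal ((c * K) ^ r) :=
        ENNReal.ofReal_rpow_of_nonneg (mul_nonneg hcnn hK.le) hr.le
    _ = ENNReal.ofReal ((c0 * K / m3 ^ θ) ^ r) * E * L ^ (θ / (p-1)) := by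
        rw [hrealeq, ENNReal.ofReal_mul (Real.rpow_nonneg (div_nonneg (mul_pos hc0 hK).le hm3θ.le) _),
          ENNReal.ofReal_mul hM0,
          ← ENNReal.ofReal_rpow_of_nonneg hD0 (mul_nonneg hθ hr.le),
          hθr, hMdef, hDdef, ENNReal.ofReal_toReal hE, ENNReal.ofReal_toReal hLne,
          mul_assoc]
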